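/- In the neighbourhood Morse geometry of type (1, n−1) with n ≥ 2 (index λ = 1), define the future-inextendible timelike curve ω₁(t) = ((ε/2)e^{−t}, 0) ∈ N for t ∈ [0,∞), where the first coordinate is the ℝ¹ = ℝ^λ factor. Then the chronological past of ω₁ is one of the two components of the past region of the Morse point: {p ∈ N : p ≪ ω₁(t) for some t ≥ 0} = P₁ = {(x,y) ∈ N : |y| < m₁ x}. -/

import Mathlib

set_option maxHeartbeats 1000000

noncomputable section

open Set Topology Filter

/-- Points of `ℝⁿ = ℝ^λ × ℝ^{n−λ}`. -/
abbrev Pt (n lam : ℕ) := EuclideanSpace ℝ (Fin lam) × EuclideanSpace ℝ (Fin (n - lam))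

/-- The Euclidean inner product on `ℝⁿ = ℝ^λ × ℝ^{n−λ}`. -/
def iprod {n lam : ℕ} (v w : Pt n lam) : ℝ :=
  (inner ℝ v.1 w.1 : ℝ) + (inner ℝ v.2 w.2 : ℝ)

/-- The punctured ball `N = {p : 0 < |p| < ε}` (Euclidean norm). -/
def NN (n lam : ℕ) (ε : ℝ) : Set (Pt n lam) :=
  {p | 0 < ‖p.1‖ ^ 2 + ‖p.2‖ ^ 2 ∧ ‖p.1‖ ^ 2 + ‖p.2‖ ^ 2 < ε ^ 2}

/-- The Euclidean gradient of the Morse function `f(x,y) = −|x|² + |y|²`. -/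
def gradf {n lam : ℕ} (p : Pt n lam) : Pt n lam :=
  ((-2 : ℝ) • p.1, (2 : ℝ) • p.2)

/-- The Morse metric with flat auxiliary metric (as a quadratic form):
`g_p(w,w) = |∇f(p)|²⟨w,w⟩ − ζ⟨∇f(p),w⟩²`. -/
def gN (ζ : ℝ) {n lam : ℕ} (p w : Pt n lam) : ℝ :=
  iprod (gradf p) (gradf p) * iprod w w - ζ * iprod (gradf p) w ^ 2

def m1 (ζ : ℝ) : ℝ := (Real.sqrt ζ - 1) / Real.sqrt (ζ - 1)
def m2 (ζ : ℝ) : ℝ := (Real.sqrt ζ + 1) / Real.sqrt (ζ - 1)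

/-- A future-directed timelike curve: a C¹ curve in `N` with everywhere timelike,
future-pointing (`⟨∇f(γ), γ'⟩ > 0`) tangent. -/
def Timelike (ζ ε : ℝ) {n lam : ℕ} (γ γ' : ℝ → Pt n lam) : Prop :=
  (∀ t ∈ Icc (0 : ℝ) 1, HasDerivAt γ (γ' t) t) ∧
  ContinuousOn γ' (Icc (0 : ℝ) 1) ∧
  (∀ t ∈ Icc (0 : ℝ) 1, γ t ∈ NN n lam ε) ∧
  (∀ t ∈ Icc (0 : ℝ) 1, gN ζ (γ t) (γ' t) < 0) ∧
  (∀ t ∈ Icc (0 : ℝ) 1, 0 < iprod (gradf (γ t)) (γ' t))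

/-- The chronology relation `q ≪ p`. -/
def chron (ζ ε : ℝ) {n lam : ℕ} (q p : Pt n lam) : Prop :=
  ∃ γ γ', Timelike ζ ε γ γ' ∧ γ 0 = q ∧ γ 1 = p

def Iplus (ζ ε : ℝ) {n lam : ℕ} (q : Pt n lam) : Set (Pt n lam) :=
  {p ∈ NN n lam ε | chron ζ ε q p}

def Iminus (ζ ε : ℝ) {n lam : ℕ} (q : Pt n lam) : Set (Pt n lam) :=
  {p ∈ NN n lam ε | chron ζ ε p q}

/-- The common past `↓U` (interior in the open set `N` of the set of points
chronologically preceding every point of `U`). -/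
def downSet (ζ ε : ℝ) {n lam : ℕ} (U : Set (Pt n lam)) : Set (Pt n lam) :=
  interior {p ∈ NN n lam ε | ∀ u ∈ U, chron ζ ε p u}

/-- The common future `↑U`. -/
def upSet (ζ ε : ℝ) {n lam : ℕ} (U : Set (Pt n lam)) : Set (Pt n lam) :=
  interior {p ∈ NN n lam ε | ∀ u ∈ U, chron ζ ε u p}

namespace Stmt10Aux

lemma inner_fin1 (v w : EuclideanSpace ℝ (Fin 1)) : (inner ℝ v w : ℝ) = v 0 * w 0 := by
  simp [PiLp.inner_apply, RCLike.inner_apply, Fin.sum_univ_one, mul_comm]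

lemma norm_sq_fin1 (v : EuclideanSpace ℝ (Fin 1)) : ‖v‖ ^ 2 = v 0 ^ 2 := by
  rw [← real_inner_self_eq_norm_sq, inner_fin1]; ring

lemma smul_norm_sq {k : ℕ} (r : ℝ) (v : EuclideanSpace ℝ (Fin k)) :
    ‖r • v‖ ^ 2 = r ^ 2 * ‖v‖ ^ 2 := by
  rw [norm_smul, mul_pow, Real.norm_eq_abs, sq_abs]

lemma m1_facts (ζ : ℝ) (hζ : 1 < ζ) :
    0 < (ζ - 1).sqrt ∧ 1 < Real.sqrt ζ ∧ Real.sqrt ζ ^ 2 = ζ ∧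
    0 < ((Real.sqrt ζ - 1) / Real.sqrt (ζ - 1)) ∧ ((Real.sqrt ζ - 1) / Real.sqrt (ζ - 1)) < 1 ∧
    Real.sqrt ζ * (1 - ((Real.sqrt ζ - 1) / Real.sqrt (ζ - 1)) ^ 2)
      = 1 + ((Real.sqrt ζ - 1) / Real.sqrt (ζ - 1)) ^ 2 := by
  have h2 : 0 < Real.sqrt (ζ - 1) := Real.sqrt_pos.2 (by linarith)
  have h1 : Real.sqrt (ζ - 1) ^ 2 = ζ - 1 := Real.sq_sqrt (by linarith)
  have hσ2 : Real.sqrt ζ ^ 2 = ζ := Real.sq_sqrt (by linarith)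
  have hσ : 1 < Real.sqrt ζ := by nlinarith [Real.sqrt_nonneg ζ]
  set m : ℝ := (Real.sqrt ζ - 1) / Real.sqrt (ζ - 1) with hm
  have hm0 : 0 < m := div_pos (by linarith) h2
  have hmsq : m ^ 2 * (Real.sqrt ζ + 1) = Real.sqrt ζ - 1 := by
    rw [hm, div_pow, h1, div_mul_eq_mul_div, div_eq_iff (by linarith : (0:ℝ) < ζ - 1).ne']
    linear_combination (Real.sqrt ζ - 1) * hσ2
  have hm1 : m < 1 := by
    by_contra h
    push_neg at h
    have hm2 : 1 ≤ m ^ 2 := by nlinarith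
    have := mul_le_mul_of_nonneg_right hm2 (by linarith : (0:ℝ) ≤ Real.sqrt ζ + 1)
    rw [one_mul] at this
    linarith
  refine ⟨h2, hσ, hσ2, hm0, hm1, by linear_combination -1 * hmsq⟩

lemma barrier (σ m a X' β' : ℝ) (hσ : 1 < σ) (hm0 : 0 < m) (hm1 : m < 1)
    (hid : σ * (1 - m ^ 2) = 1 + m ^ 2) (ha : 0 < a)
    (hfut : 0 < -(a * X') + m * a * β')
    (htl : (a ^ 2 + (m * a) ^ 2) * (X' ^ 2 + β' ^ 2) < σ ^ 2 * (-(a * X') + m * a * β') ^ 2) :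
    m * X' < β' := by
  by_contra hcon
  push_neg at hcon
  have ha2 : 0 < a ^ 2 := by positivity
  have hm2 : m ^ 2 < 1 := by nlinarith
  have hfut' : 0 < -X' + m * β' := by
    have h' : 0 < a * (-X' + m * β') := by nlinarith
    rcases mul_pos_iff.mp h' with ⟨_, h⟩ | ⟨h1, _⟩
    · exact h
    · linarith
  have htl' : (1 + m ^ 2) * (X' ^ 2 + β' ^ 2) < σ ^ 2 * (-X' + m * β') ^ 2 := by
    have e : (a ^ 2 + (m * a) ^ 2) * (X' ^ 2 + β' ^ 2)
        = a ^ 2 * ((1 + m ^ 2) * (X' ^ 2 + β' ^ 2)) := by ring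
    have e2 : σ ^ 2 * (-(a * X') + m * a * β') ^ 2
        = a ^ 2 * (σ ^ 2 * (-X' + m * β') ^ 2) := by ring
    rw [e, e2] at htl
    exact lt_of_mul_lt_mul_left htl ha2.le
  have hX : X' < 0 := by
    by_contra hX0
    push_neg at hX0
    have h1 : m * β' ≤ m * (m * X') := mul_le_mul_of_nonneg_left hcon hm0.le
    have h2 : m * (m * X') ≤ X' := by nlinarith [mul_nonneg hX0 (sub_nonneg.2 hm2.le)]
    linarith
  have hβ : β' < 0 := by nlinarith
  -- second factor nonneg
  have h3 : 0 < m * (3 - m ^ 2) := by nlinarith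
  have humv : m * (-β') < -X' := by linarith
  have hvmu : 0 ≤ (-β') - m * (-X') := by nlinarith
  have hfact : 0 ≤ ((-β') - m * (-X')) * (m * (3 - m ^ 2) * (-X') - (3 * m ^ 2 - 1) * (-β')) := by
    refine mul_nonneg hvmu ?_
    nlinarith [mul_le_mul_of_nonneg_left humv.le h3.le]
  have hidr : (1 - m ^ 2) ^ 2 * (X' ^ 2 + β' ^ 2)
        - (1 + m ^ 2) * ((-X') - m * (-β')) ^ 2
      = ((-β') - m * (-X')) * (m * (3 - m ^ 2) * (-X') - (3 * m ^ 2 - 1) * (-β')) := by ring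
  have key : (1 + m ^ 2) * ((-X') - m * (-β')) ^ 2 ≤ (1 - m ^ 2) ^ 2 * (X' ^ 2 + β' ^ 2) := by
    linarith [hfact, hidr]
  have hidsq : σ ^ 2 * (1 - m ^ 2) ^ 2 = (1 + m ^ 2) ^ 2 := by
    linear_combination (σ * (1 - m ^ 2) + (1 + m ^ 2)) * hid
  have hmm : 0 < (1 - m ^ 2) ^ 2 := by nlinarith
  have h1m : (0:ℝ) < 1 + m ^ 2 := by positivity
  have final : σ ^ 2 * (-X' + m * β') ^ 2 ≤ (1 + m ^ 2) * (X' ^ 2 + β' ^ 2) := by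
    nlinarith [key, hidsq, hmm, h1m, sq_nonneg (-X' + m * β')]
  linarith

lemma fwd_ineq (ζ σ m x β c δ u : ℝ) (hσ : 1 < σ) (hζσ : σ ^ 2 = ζ)
    (hid : σ * (1 - m ^ 2) = 1 + m ^ 2) (hm0 : 0 < m) (hm1 : m < 1)
    (hx : 0 < x) (hβ0 : 0 ≤ β) (hδ0 : 0 < δ) (hc0 : 0 < c)
    (hβc : β < m * (c * x)) (hu : 0 ≤ u) :
    ((δ + u * c) ^ 2 * x ^ 2 + u ^ 2 * β ^ 2) * (c ^ 2 * x ^ 2 + β ^ 2)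
      < ζ * ((δ + u * c) * c * x ^ 2 - u * β ^ 2) ^ 2 := by
  have hX : 0 < c * x := mul_pos hc0 hx
  have hβ2 : β ^ 2 < m ^ 2 * (c * x) ^ 2 := by nlinarith
  have hm2 : m ^ 2 < 1 := by nlinarith
  have hmsq : m ^ 2 * (σ + 1) = σ - 1 := by nlinarith
  have t1 : (c * x) ^ 2 + β ^ 2 < σ * ((c * x) ^ 2 - β ^ 2) := by nlinarith
  have t2 : ((c * x) ^ 2 + β ^ 2) ^ 2 < ζ * ((c * x) ^ 2 - β ^ 2) ^ 2 := by
    have hpos : (0:ℝ) ≤ (c * x) ^ 2 + β ^ 2 := by positivity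
    nlinarith [mul_self_lt_mul_self hpos t1]
  have t3 : (c * x) ^ 2 + β ^ 2 ≤ ζ * ((c * x) ^ 2 - β ^ 2) := by nlinarith
  have t4 : (c * x) ^ 2 + β ^ 2 < ζ * (c * x) ^ 2 := by nlinarith
  have expand : ζ * ((δ + u * c) * c * x ^ 2 - u * β ^ 2) ^ 2
      - ((δ + u * c) ^ 2 * x ^ 2 + u ^ 2 * β ^ 2) * (c ^ 2 * x ^ 2 + β ^ 2)
      = δ ^ 2 * x ^ 2 * (ζ * (c * x) ^ 2 - ((c * x) ^ 2 + β ^ 2))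
        + 2 * δ * u * x ^ 2 * c * (ζ * ((c * x) ^ 2 - β ^ 2) - ((c * x) ^ 2 + β ^ 2))
        + u ^ 2 * (ζ * ((c * x) ^ 2 - β ^ 2) ^ 2 - ((c * x) ^ 2 + β ^ 2) ^ 2) := by ring
  have h1 : 0 < δ ^ 2 * x ^ 2 * (ζ * (c * x) ^ 2 - ((c * x) ^ 2 + β ^ 2)) :=
    mul_pos (by positivity) (by linarith)
  have h2 : 0 ≤ 2 * δ * u * x ^ 2 * c * (ζ * ((c * x) ^ 2 - β ^ 2) - ((c * x) ^ 2 + β ^ 2)) :=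
    mul_nonneg (by positivity) (by linarith)
  have h3 : 0 ≤ u ^ 2 * (ζ * ((c * x) ^ 2 - β ^ 2) ^ 2 - ((c * x) ^ 2 + β ^ 2) ^ 2) :=
    mul_nonneg (sq_nonneg u) (by linarith)
  linarith [expand, h1, h2, h3]


end Stmt10Aux

open Stmt10Aux in
/-- for index `λ = 1`, the chronological past of the
future-inextendible timelike curve `ω₁(t) = ((ε/2)e^{−t}, 0)` is one of the two
components of the past region of the Morse point:
`P₁ = {(x,y) ∈ N : |y| < m₁x}`. -/
theorem stmt10 (n : ℕ) (hn : 2 ≤ n) (ζ ε : ℝ) (hζ : 1 < ζ) (hε : 0 < ε) :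
    {p : Pt n 1 | p ∈ NN n 1 ε ∧ ∃ t : ℝ, 0 ≤ t ∧
        chron ζ ε p (EuclideanSpace.single 0 (ε / 2 * Real.exp (-t)),
          (0 : EuclideanSpace ℝ (Fin (n - 1))))} =
      {p ∈ NN n 1 ε | ‖p.2‖ < m1 ζ * p.1 0} := by
  obtain ⟨hs2, hσ1', hσ2', hM0', hM1', hid'⟩ := m1_facts ζ hζ
  set σ : ℝ := Real.sqrt ζ with hσdef
  set M : ℝ := m1 ζ with hMdef
  have hσ1 : 1 < σ := hσ1'
  have hσ2 : σ ^ 2 = ζ := hσ2'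
  have hM0 : 0 < M := hM0'
  have hM1 : M < 1 := hM1'
  have hid : σ * (1 - M ^ 2) = 1 + M ^ 2 := hid'
  clear hσ1' hσ2' hM0' hM1' hid'
  clear_value σ M
  ext p
  simp only [mem_setOf_eq, Set.mem_sep_iff]
  constructor
  · rintro ⟨hpN, t, ht, γ, γ', ⟨hder, hγ'c, hmem, htl, hfut⟩, h0, h1⟩
    refine ⟨hpN, ?_⟩
    by_contra hcon
    push_neg at hcon
    set F : ℝ → ℝ := fun s => ‖(γ s).2‖ - M * ((γ s).1 0) with hFdef
    have hγc : ContinuousOn γ (Icc 0 1) := fun s hs =>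
      (hder s hs).continuousAt.continuousWithinAt
    have hGcont : Continuous fun q : Pt n 1 => ‖q.2‖ - M * (q.1 0) := by
      refine (continuous_snd.norm).sub (continuous_const.mul ?_)
      exact (EuclideanSpace.proj (0 : Fin 1)).continuous.comp continuous_fst
    have hFc : ContinuousOn F (Icc 0 1) := fun s hs =>
      hGcont.continuousAt.comp_continuousWithinAt (hγc s hs)
    set S : Set ℝ := Icc (0 : ℝ) 1 ∩ F ⁻¹' Ici 0 with hSdef
    have h0S : (0 : ℝ) ∈ S := by
      refine ⟨left_mem_Icc.2 zero_le_one, ?_⟩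
      show (0 : ℝ) ≤ F 0
      simp only [hFdef, h0]
      linarith [hcon]
    have hbdd : BddAbove S := ⟨1, fun s hs => hs.1.2⟩
    have hSclosed : IsClosed S :=
      hFc.preimage_isClosed_of_isClosed isClosed_Icc isClosed_Ici
    set t₀ : ℝ := sSup S with ht₀def
    have ht₀S : t₀ ∈ S := hSclosed.csSup_mem ⟨0, h0S⟩ hbdd
    have ht₀I : t₀ ∈ Icc (0 : ℝ) 1 := ht₀S.1
    have hFt₀nn : (0 : ℝ) ≤ F t₀ := ht₀S.2
    have hE : 0 < ε / 2 * Real.exp (-t) := by positivity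
    have hF1 : F 1 < 0 := by
      simp only [hFdef, h1]
      simp [EuclideanSpace.single_apply]
      have h2 := mul_pos hM0 hE
      linarith only [h2]
    have ht₀1 : t₀ < 1 :=
      lt_of_le_of_ne ht₀I.2 (by intro h; rw [h] at hFt₀nn; linarith)
    have hneg : ∀ s ∈ Ioc t₀ 1, F s < 0 := by
      intro s hs
      by_contra h
      push_neg at h
      have hsS : s ∈ S := ⟨⟨le_trans ht₀I.1 hs.1.le, hs.2⟩, h⟩
      exact absurd (le_csSup hbdd hsS) (not_le.2 hs.1)
    haveI hNB : (𝓝[Ioc t₀ 1] t₀).NeBot := by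
      apply mem_closure_iff_nhdsWithin_neBot.mp
      rw [closure_Ioc ht₀1.ne]
      exact left_mem_Icc.2 ht₀1.le
    have hd := hder t₀ ht₀I
    have hFt₀ : F t₀ = 0 := by
      refine le_antisymm ?_ hFt₀nn
      have hFat : ContinuousAt F t₀ := by
        rw [hFdef]
        exact hGcont.continuousAt.comp hd.continuousAt
      have htend : Filter.Tendsto F (𝓝[Ioc t₀ 1] t₀) (𝓝 (F t₀)) :=
        hFat.tendsto.mono_left nhdsWithin_le_nhds
      exact le_of_tendsto htend (eventually_mem_nhdsWithin.mono fun s hs => (hneg s hs).le)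
    set a : ℝ := (γ t₀).1 0 with hadef
    set b : ℝ := ‖(γ t₀).2‖ with hbdef
    have hba : b = M * a := by
      have h := hFt₀
      simp only [hFdef] at h
      rw [← hadef, ← hbdef] at h
      linarith [h]
    have hb0 : 0 ≤ b := by rw [hbdef]; exact norm_nonneg _
    have ha0 : 0 ≤ a := by
      by_contra h
      push_neg at h
      have := mul_neg_of_pos_of_neg hM0 h
      linarith
    have hPN := hmem t₀ ht₀I
    have ha : 0 < a := by
      rcases ha0.eq_or_lt with h | h
      · exfalso
        have hbz : b = 0 := by rw [hba, ← h]; ring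
        have h2 : ‖(γ t₀).2‖ ^ 2 = 0 := by rw [← hbdef, hbz]; ring
        have h1' : ‖(γ t₀).1‖ ^ 2 = 0 := by rw [norm_sq_fin1, ← hadef, ← h]; ring
        have hc0' := hPN.1
        rw [h1', h2] at hc0'
        norm_num at hc0'
      · exact h
    have hbpos : 0 < b := by rw [hba]; exact mul_pos hM0 ha
    -- derivatives at t₀
    have hd1 : HasDerivAt (fun s => (γ s).1 0) ((γ' t₀).1 0) t₀ := by
      exact (((EuclideanSpace.proj (0 : Fin 1)).comp
        (ContinuousLinearMap.fst ℝ (EuclideanSpace ℝ (Fin 1))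
          (EuclideanSpace ℝ (Fin (n - 1))))).hasFDerivAt.comp_hasDerivAt t₀ hd)
    have hd2 : HasDerivAt (fun s => (γ s).2) ((γ' t₀).2) t₀ :=
      ((ContinuousLinearMap.snd ℝ (EuclideanSpace ℝ (Fin 1))
        (EuclideanSpace ℝ (Fin (n - 1)))).hasFDerivAt.comp_hasDerivAt t₀ hd)
    set X' : ℝ := (γ' t₀).1 0 with hX'def
    set τ : ℝ := (inner ℝ ((γ t₀).2) ((γ' t₀).2) : ℝ) with hτdef
    have hdi : HasDerivAt (fun s => (inner ℝ ((γ s).2) ((γ s).2) : ℝ)) (τ + τ) t₀ := by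
      have h2 := hd2.inner (𝕜 := ℝ) hd2
      exact h2.congr_deriv (by rw [hτdef, real_inner_comm ((γ' t₀).2) ((γ t₀).2)])
    have hinn0 : (inner ℝ ((γ t₀).2) ((γ t₀).2) : ℝ) = b ^ 2 := by
      rw [real_inner_self_eq_norm_sq, ← hbdef]
    have hsb : Real.sqrt ((inner ℝ ((γ t₀).2) ((γ t₀).2) : ℝ)) = b := by
      rw [real_inner_self_eq_norm_mul_norm, Real.sqrt_mul_self (norm_nonneg _), ← hbdef]
    have hDnorm : HasDerivAt (fun s => ‖(γ s).2‖) (τ / b) t₀ := by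
      have hne : (inner ℝ ((γ t₀).2) ((γ t₀).2) : ℝ) ≠ 0 := by rw [hinn0]; positivity
      have hc2 := (Real.hasDerivAt_sqrt hne).comp t₀ hdi
      have heq : ((fun x : ℝ => Real.sqrt x) ∘ fun s => (inner ℝ ((γ s).2) ((γ s).2) : ℝ))
          = fun s => ‖(γ s).2‖ := by
        funext u
        show Real.sqrt ((inner ℝ ((γ u).2) ((γ u).2) : ℝ)) = ‖(γ u).2‖
        rw [real_inner_self_eq_norm_mul_norm, Real.sqrt_mul_self (norm_nonneg _)]
      rw [heq] at hc2
      exact hc2.congr_deriv (by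
        rw [hsb, div_mul_eq_mul_div, one_mul,
          div_eq_div_iff (mul_pos two_pos hbpos).ne' hbpos.ne']
        ring)
    have hF' : HasDerivAt F (τ / b - M * X') t₀ := by
      rw [hFdef]
      exact hDnorm.sub (hd1.const_mul M)
    -- timelike data at t₀
    have hfut₀ := hfut t₀ ht₀I
    have htl₀ := htl t₀ ht₀I
    have e1 : iprod (gradf (γ t₀)) (γ' t₀) = 2 * (-(a * X') + τ) := by
      simp only [iprod, gradf, real_inner_smul_left, inner_fin1]
      rw [← hadef, ← hX'def, ← hτdef]
      ring
    have e2 : gN ζ (γ t₀) (γ' t₀) =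
        4 * (a ^ 2 + b ^ 2) * (X' ^ 2 + ‖(γ' t₀).2‖ ^ 2)
          - ζ * (2 * (-(a * X') + τ)) ^ 2 := by
      simp only [gN, iprod, gradf, real_inner_smul_left, real_inner_smul_right, inner_fin1]
      rw [← hadef, ← hX'def, ← hτdef, hinn0, real_inner_self_eq_norm_sq]
      ring
    have hfutτ : 0 < -(a * X') + τ := by
      rw [e1] at hfut₀
      linarith
    have htlP : (a ^ 2 + b ^ 2) * (X' ^ 2 + ‖(γ' t₀).2‖ ^ 2) < ζ * (-(a * X') + τ) ^ 2 := by
      rw [e2] at htl₀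
      linarith only [htl₀]
    have hcs := abs_real_inner_le_norm ((γ t₀).2) ((γ' t₀).2)
    rw [← hτdef, ← hbdef] at hcs
    have hcs2 : τ ^ 2 ≤ b ^ 2 * ‖(γ' t₀).2‖ ^ 2 := by
      have h2 := mul_self_le_mul_self (abs_nonneg τ) hcs
      have h3 : |τ| * |τ| = τ ^ 2 := by rw [← abs_mul, abs_mul_self]; ring
      linarith only [h2, h3]
    set β' : ℝ := τ / b with hβ'def
    have hτβ' : τ = b * β' := by rw [hβ'def]; field_simp
    have hβ'2 : β' ^ 2 ≤ ‖(γ' t₀).2‖ ^ 2 := by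
      rw [hβ'def, div_pow, div_le_iff₀ (by positivity : (0:ℝ) < b ^ 2)]
      linarith only [hcs2]
    have hMaβ' : M * a * β' = τ := by rw [← hba, ← hτβ']
    have hbarfut : 0 < -(a * X') + M * a * β' := by rw [hMaβ']; exact hfutτ
    have hbartl : (a ^ 2 + (M * a) ^ 2) * (X' ^ 2 + β' ^ 2)
        < σ ^ 2 * (-(a * X') + M * a * β') ^ 2 := by
      rw [hMaβ', ← hba, hσ2]
      calc (a ^ 2 + b ^ 2) * (X' ^ 2 + β' ^ 2)
          ≤ (a ^ 2 + b ^ 2) * (X' ^ 2 + ‖(γ' t₀).2‖ ^ 2) := by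
            apply mul_le_mul_of_nonneg_left (by linarith [hβ'2]) (by positivity)
        _ < ζ * (-(a * X') + τ) ^ 2 := htlP
    have hbar := Stmt10Aux.barrier σ M a X' β' hσ1 hM0 hM1 hid ha hbarfut hbartl
    have hD : 0 < τ / b - M * X' := by
      rw [← hβ'def]
      linarith [hbar]
    -- slope argument
    have hslope := hasDerivAt_iff_tendsto_slope.mp hF'
    have hsub : (𝓝[Ioc t₀ 1] t₀) ≤ (𝓝[≠] t₀) :=
      nhdsWithin_mono t₀ (fun s hs => hs.1.ne')
    have hev : ∀ᶠ s in 𝓝[Ioc t₀ 1] t₀, 0 < slope F t₀ s :=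
      (hslope.mono_left hsub).eventually (eventually_gt_nhds hD)
    obtain ⟨s, hss, hsI⟩ := (hev.and eventually_mem_nhdsWithin).exists
    have hst : 0 < s - t₀ := by linarith [hsI.1]
    rw [slope_def_field, hFt₀, sub_zero] at hss
    have hFs : 0 < F s := by
      rcases div_pos_iff.mp hss with ⟨h1', _⟩ | ⟨_, h2'⟩
      · exact h1'
      · linarith
    exact absurd hFs (not_lt.2 (hneg s hsI).le)
  · rintro ⟨hpN, hlt⟩
    set x : ℝ := p.1 0 with hxdef
    set β : ℝ := ‖p.2‖ with hβdef
    have hβ0 : 0 ≤ β := norm_nonneg _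
    have hx : 0 < x := by
      by_contra h
      push_neg at h
      have : M * x ≤ 0 := mul_nonpos_of_nonneg_of_nonpos hM0.le h
      linarith
    have hnx : ‖p.1‖ ^ 2 = x ^ 2 := norm_sq_fin1 p.1
    have hxε : x < ε := by
      by_contra h
      push_neg at h
      have h2 := mul_self_le_mul_self hε.le h
      have h3 := hpN.2
      rw [hnx] at h3
      linarith only [h2, h3, sq_nonneg ‖p.2‖]
    have hMx : 0 < M * x := mul_pos hM0 hx
    set c : ℝ := (β / (M * x) + 1) / 2 with hcdef
    have hq0 : 0 ≤ β / (M * x) := div_nonneg hβ0 hMx.le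
    have hq1 : β / (M * x) < 1 := (div_lt_one hMx).2 hlt
    have hchalf : 1 / 2 ≤ c := by rw [hcdef]; linarith
    have hc0 : 0 < c := by linarith
    have hc1 : c < 1 := by rw [hcdef]; linarith
    set δ : ℝ := 1 - c with hδdef
    have hδ0 : 0 < δ := by rw [hδdef]; linarith
    have hδhalf : δ ≤ 1 / 2 := by rw [hδdef]; linarith
    have hβc : β < M * (c * x) := by
      have e : M * (c * x) = (β + M * x) / 2 := by
        rw [hcdef]; field_simp
      rw [e]; linarith
    have hδx : 0 < δ * x := mul_pos hδ0 hx
    have hip : (inner ℝ p.1 p.1 : ℝ) = x ^ 2 := by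
      rw [inner_fin1, ← hxdef]; ring
    have hiq : (inner ℝ p.2 p.2 : ℝ) = β ^ 2 := by
      rw [real_inner_self_eq_norm_sq, ← hβdef]
    clear_value x β c δ
    set t' : ℝ := Real.log (ε / (2 * (δ * x))) with ht'def
    clear_value t'
    have h2δx : 2 * (δ * x) ≤ ε := by
      have hp2 : 0 ≤ (1 / 2 - δ) * x := mul_nonneg (by linarith only [hδhalf]) hx.le
      linarith only [hp2, hxε]
    have ht' : 0 ≤ t' := by
      rw [ht'def]
      exact Real.log_nonneg ((one_le_div (by positivity)).2 h2δx)
    have hexp : ε / 2 * Real.exp (-t') = δ * x := by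
      rw [ht'def, Real.exp_neg, Real.exp_log (by positivity)]
      field_simp
    set γ : ℝ → Pt n 1 := fun s => ((1 - s * c) • p.1, (1 - s) • p.2) with hγdef
    set W : Pt n 1 := ((-c) • p.1, (-1 : ℝ) • p.2) with hWdef
    have hβcx : β < c * x := by
      have h2 := mul_lt_mul_of_pos_right hM1 (mul_pos hc0 hx)
      rw [one_mul] at h2
      calc β < M * (c * x) := hβc
        _ < c * x := h2
    have hcx2 : β ^ 2 < (c * x) ^ 2 := by
      have h2 := mul_self_lt_mul_self hβ0 hβcx
      linarith only [h2]
    refine ⟨hpN, t', ht', γ, fun _ => W, ⟨?_, continuousOn_const, ?_, ?_, ?_⟩, ?_, ?_⟩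
    · intro s hs
      have h1 : HasDerivAt (fun s : ℝ => 1 - s * c) (-c) s := by
        simpa using ((hasDerivAt_id s).mul_const c).const_sub 1
      have h2 : HasDerivAt (fun s : ℝ => 1 - s) (-1 : ℝ) s := by
        simpa using (hasDerivAt_id s).const_sub 1
      exact (h1.smul_const p.1).prodMk (h2.smul_const p.2)
    · intro s hs
      obtain ⟨hs0, hs1⟩ := hs
      have e1 : ‖(γ s).1‖ ^ 2 = (1 - s * c) ^ 2 * x ^ 2 := by
        rw [hγdef]; rw [smul_norm_sq, hnx]
      have e2 : ‖(γ s).2‖ ^ 2 = (1 - s) ^ 2 * β ^ 2 := by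
        rw [hγdef]; rw [smul_norm_sq, hβdef]
      have hA : δ ≤ 1 - s * c := by
        have h2 := mul_nonneg hc0.le (sub_nonneg.2 hs1)
        linarith only [h2, hδdef]
      have hA1 : 1 - s * c ≤ 1 := by
        have h2 := mul_nonneg hs0 hc0.le
        linarith only [h2]
      have hA2 : δ ^ 2 * x ^ 2 ≤ (1 - s * c) ^ 2 * x ^ 2 :=
        mul_le_mul_of_nonneg_right (pow_le_pow_left₀ hδ0.le hA 2) (sq_nonneg x)
      have hB2 : (1 - s * c) ^ 2 ≤ 1 := by
        have h2 := mul_self_le_mul_self (le_trans hδ0.le hA) hA1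
        linarith only [h2]
      have hC2 : (1 - s) ^ 2 ≤ 1 := by
        have h2 := mul_self_le_mul_self (by linarith only [hs1] : (0:ℝ) ≤ 1 - s) (by linarith only [hs0] : (1:ℝ) - s ≤ 1)
        linarith only [h2]
      have hpε := hpN.2
      rw [hnx, ← hβdef] at hpε
      constructor
      · rw [e1, e2]
        have hpos : 0 < δ ^ 2 * x ^ 2 := by positivity
        linarith only [hA2, hpos, sq_nonneg ((1 - s) * β)]
      · rw [e1, e2]
        have hu1 : (1 - s * c) ^ 2 * x ^ 2 ≤ x ^ 2 := by
          have h2 := mul_le_mul_of_nonneg_right hB2 (sq_nonneg x)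
          linarith only [h2]
        have hu2 : (1 - s) ^ 2 * β ^ 2 ≤ β ^ 2 := by
          have h2 := mul_le_mul_of_nonneg_right hC2 (sq_nonneg β)
          linarith only [h2]
        linarith
    · intro s hs
      obtain ⟨hs0, hs1⟩ := hs
      have egN : gN ζ (γ s) W =
          4 * (((1 - s * c)) ^ 2 * x ^ 2 + (1 - s) ^ 2 * β ^ 2) * (c ^ 2 * x ^ 2 + β ^ 2)
            - ζ * (2 * (c * (1 - s * c) * x ^ 2 - (1 - s) * β ^ 2)) ^ 2 := by
        simp only [hγdef, hWdef, gN, iprod, gradf, real_inner_smul_left,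
          real_inner_smul_right, hip, hiq]
        ring
      have e : (1 - s * c) = δ + (1 - s) * c := by rw [hδdef]; ring
      have key := Stmt10Aux.fwd_ineq ζ σ M x β c δ (1 - s) hσ1 hσ2 hid hM0 hM1 hx hβ0 hδ0 hc0
        hβc (by linarith)
      rw [egN, e]
      linarith only [key]
    · intro s hs
      obtain ⟨hs0, hs1⟩ := hs
      have efut : iprod (gradf (γ s)) W = 2 * (c * (1 - s * c) * x ^ 2 - (1 - s) * β ^ 2) := by
        simp only [hγdef, hWdef, iprod, gradf, real_inner_smul_left,
          real_inner_smul_right, hip, hiq]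
        ring
      rw [efut]
      have e : c * (1 - s * c) * x ^ 2 - (1 - s) * β ^ 2
          = δ * c * x ^ 2 + (1 - s) * ((c * x) ^ 2 - β ^ 2) := by rw [hδdef]; ring
      rw [e]
      linarith only [mul_pos (mul_pos hδ0 hc0) (mul_pos hx hx),
        mul_nonneg (by linarith only [hs1] : (0:ℝ) ≤ 1 - s)
          (by linarith only [hcx2] : (0:ℝ) ≤ (c * x) ^ 2 - β ^ 2)]
    · show ((1 - 0 * c) • p.1, ((1 : ℝ) - 0) • p.2) = p
      norm_num
    · show ((1 - 1 * c) • p.1, ((1 : ℝ) - 1) • p.2) = (EuclideanSpace.single 0 (ε / 2 * Real.exp (-t')), 0)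
      rw [hexp]
      refine Prod.ext ?_ ?_
      · show (1 - 1 * c) • p.1 = EuclideanSpace.single 0 (δ * x)
        ext i
        fin_cases i
        simp [EuclideanSpace.single_apply, hδdef, hxdef]
      · show ((1 : ℝ) - 1) • p.2 = 0
        norm_num
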